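/- The set of bottleneck states of a finite MDP with at least one goal-reaching trace forms a set that is totally ordered by the 'first visit' order: for any two bottlenecks b1, b2, either every goal-reaching trace from s0 visits b1 before (or at the same time as) b2, or every goal-reaching trace visits b2 before b1. -/

import Mathlib

/-- A nonzero-probability trace in an MDP. -/
def NZPath {S A : Type} (T : S → A → S → ℝ) (p : List S) : Prop :=
  p.Chain' (fun s s' => ∃ a, 0 < T s a s')

/-- A goal-reaching trace from `s0`. -/
def GoalTrace {S A : Type} (T : S → A → S → ℝ) (s0 : S) (SG : Set S) (p : List S) : Prop :=
  p ≠ [] ∧ p.head? = some s0 ∧ NZPath T p ∧ ∃ g ∈ SG, p.getLast? = some g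

/-- A bottleneck state: visited by every goal-reaching trace from `s0`. -/
def Bottleneck {S A : Type} (T : S → A → S → ℝ) (s0 : S) (SG : Set S) (b : S) : Prop :=
  ∀ p : List S, GoalTrace T s0 SG p → b ∈ p

namespace Stmt6Aux

lemma head?_take {α : Type*} {l : List α} {n : ℕ} (h : 0 < n) :
    (l.take n).head? = l.head? := by
  cases l <;> cases n <;> simp_all

lemma getLast?_take_succ {α : Type*} {l : List α} {i : ℕ} (hi : i < l.length) :
    (l.take (i + 1)).getLast? = some l[i] := by
  rw [List.getLast?_eq_getElem?]
  have hlen : (l.take (i + 1)).length = i + 1 := by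
    simp [List.length_take]; omega
  rw [hlen]
  simp only [Nat.add_sub_cancel]
  rw [List.getElem?_take_of_lt (Nat.lt_succ_self i)]
  exact List.getElem?_eq_getElem hi

lemma idxOf_lt_of_mem_take {α : Type*} [DecidableEq α] {l : List α} {b : α} {n : ℕ}
    (h : b ∈ l.take n) : l.idxOf b < n := by
  have h1 : l.idxOf b = (l.take n).idxOf b := by
    conv_lhs => rw [← List.take_append_drop n l]
    exact List.idxOf_append_of_mem h
  have h2 : (l.take n).idxOf b < (l.take n).length := List.idxOf_lt_length_iff.2 h
  have h3 : (l.take n).length ≤ n := by simp [List.length_take]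
  omega

lemma mem_take_of_idxOf_lt {α : Type*} [DecidableEq α] {l : List α} {b : α} {n : ℕ}
    (hb : b ∈ l) (h : l.idxOf b < n) : b ∈ l.take n := by
  have hlt : l.idxOf b < l.length := List.idxOf_lt_length_iff.2 hb
  have : (l.take n)[l.idxOf b]? = some b := by
    rw [List.getElem?_take_of_lt h]
    exact List.getElem?_idxOf hb
  obtain ⟨hlt2, heq⟩ := List.getElem?_eq_some_iff.1 this
  exact heq ▸ List.getElem_mem hlt2

lemma drop_getLast? {α : Type*} {l : List α} {k : ℕ} (h : l.drop k ≠ []) :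
    (l.drop k).getLast? = l.getLast? := by
  conv_rhs => rw [← List.take_append_drop k l]
  rw [List.getLast?_append]
  cases hq : (l.drop k).getLast? with
  | none => exact absurd (List.getLast?_eq_none_iff.1 hq) h
  | some y => simp

/-- Splicing a path ending at `b` with a path starting at `b` and ending at a goal. -/
lemma splice {S A : Type} (T : S → A → S → ℝ) (s0 : S) (SG : Set S) (P Q : List S) (b : S)
    (hP0 : P.head? = some s0) (hPc : NZPath T P) (hPl : P.getLast? = some b)
    (hQc : NZPath T Q) (hQh : Q.head? = some b) (hQg : ∃ g ∈ SG, Q.getLast? = some g) :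
    GoalTrace T s0 SG (P ++ Q.tail) := by
  have hPne : P ≠ [] := by intro h; subst h; simp at hP0
  obtain ⟨q0, t, rfl⟩ : ∃ q0 t, Q = q0 :: t := by
    cases Q with
    | nil => simp at hQh
    | cons a l => exact ⟨a, l, rfl⟩
  have hq0 : q0 = b := by simpa using hQh
  subst hq0
  refine ⟨by simp [hPne], ?_, ?_, ?_⟩
  · rw [List.head?_append]
    cases hp : P.head? with
    | none => exact absurd (List.head?_eq_none_iff.1 hp) hPne
    | some y => rw [hp] at hP0; simpa using hP0
  · unfold NZPath at *
    unfold List.Chain'; rw [List.isChain_append]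
    refine ⟨hPc, (List.isChain_cons.1 hQc).2, ?_⟩
    intro x hx y hy
    rw [hPl] at hx
    simp only [Option.mem_def, Option.some.injEq] at hx
    subst hx
    exact (List.isChain_cons.1 hQc).1 y hy
  · obtain ⟨g, hg, hlast⟩ := hQg
    refine ⟨g, hg, ?_⟩
    cases t with
    | nil =>
      simp only [List.tail_cons, List.append_nil]
      simp only [List.getLast?_singleton, Option.some.injEq] at hlast
      rw [hPl, hlast]
    | cons c t' =>
      rw [List.tail_cons, List.getLast?_append]
      rw [List.getLast?_cons_cons] at hlast
      rw [hlast]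
      simp

/-- From any goal trace we can extract a goal trace with no duplicates. -/
lemma exists_nodup_goaltrace {S A : Type} [DecidableEq S] (T : S → A → S → ℝ)
    (s0 : S) (SG : Set S) (hreach : ∃ p : List S, GoalTrace T s0 SG p) :
    ∃ r : List S, GoalTrace T s0 SG r ∧ r.Nodup := by
  obtain ⟨p, hp⟩ := hreach
  have aux : ∀ n (p : List S), p.length ≤ n → GoalTrace T s0 SG p →
      ∃ r : List S, GoalTrace T s0 SG r ∧ r.Nodup := by
    intro n
    induction n with
    | zero =>
      intro p hlen hp
      obtain ⟨hne, _⟩ := hp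
      exact absurd (List.length_eq_zero_iff.1 (Nat.le_zero.1 hlen)) hne
    | succ m ih =>
      intro p hlen hp
      by_cases hnd : p.Nodup
      · exact ⟨p, hp, hnd⟩
      obtain ⟨x, hx2⟩ := List.exists_duplicate_iff_not_nodup.2 hnd
      have hxmem : x ∈ p := hx2.mem
      set i := p.idxOf x with hi
      have hilt : i < p.length := List.idxOf_lt_length_iff.2 hxmem
      -- x occurs again after index i
      have hcount : 2 ≤ p.count x := List.duplicate_iff_two_le_count.1 hx2
      have hxdrop : x ∈ p.drop (i + 1) := by
        by_contra hnot
        have hsplit : p = p.take (i + 1) ++ p.drop (i + 1) := (List.take_append_drop _ _).symm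
        have hc1 : p.count x = (p.take (i + 1)).count x + (p.drop (i + 1)).count x := by
          conv_lhs => rw [hsplit]
          exact List.count_append
        have hcd : (p.drop (i + 1)).count x = 0 := List.count_eq_zero.2 hnot
        have htk : p.take (i + 1) = p.take i ++ [x] := by
          rw [List.take_succ]
          congr
          rw [List.getElem?_eq_getElem hilt, List.getElem_idxOf hilt]
          rfl
        have hxti : x ∉ p.take i := fun h => absurd (idxOf_lt_of_mem_take h) (by omega)
        have hct : (p.take (i + 1)).count x = 1 := by
          rw [htk, List.count_append, List.count_eq_zero.2 hxti]
          simp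
        omega
      set d := p.drop (i + 1) with hd
      set j := d.idxOf x with hj
      have hjlt : j < d.length := List.idxOf_lt_length_iff.2 hxdrop
      set P := p.take (i + 1) with hP
      set Q := d.drop j with hQ
      have hQeq : Q = p.drop (i + 1 + j) := by rw [hQ, hd, List.drop_drop]
      have hQne : Q ≠ [] := by
        rw [hQ, ← List.length_pos_iff]
        rw [List.length_drop]
        omega
      obtain ⟨hne, h0, hc, g, hg, hlast⟩ := hp
      have hsp := splice T s0 SG P Q x
        (by rw [hP, head?_take (Nat.succ_pos i)]; exact h0)
        (hc.prefix (List.take_prefix _ _))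
        (by rw [hP, getLast?_take_succ hilt, List.getElem_idxOf hilt])
        (by
          have : Q <:+ p := hQeq ▸ List.drop_suffix _ _
          exact hc.suffix this)
        (by
          rw [hQ, List.head?_drop]
          exact List.getElem?_idxOf hxdrop)
        ⟨g, hg, by
          rw [hQeq, drop_getLast? (hQeq ▸ hQne : p.drop (i + 1 + j) ≠ [])]
          exact hlast⟩
      refine ih (P ++ Q.tail) ?_ hsp
      have hlP : P.length = i + 1 := by rw [hP, List.length_take]; omega
      have hlQ : Q.length = p.length - (i + 1 + j) := by rw [hQeq, List.length_drop]
      have hQpos : 0 < Q.length := List.length_pos_iff.2 hQne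
      have hlen' : (P ++ Q.tail).length = P.length + Q.length - 1 := by
        rw [List.length_append, List.length_tail]; omega
      omega
  exact aux p.length p le_rfl hp

/-- Key contradiction: a trace where `b2` strictly precedes `b1` and a nodup trace
where `b1` strictly precedes `b2` together contradict `b1` being a bottleneck. -/
lemma key {S A : Type} [DecidableEq S] (T : S → A → S → ℝ) (s0 : S) (SG : Set S) {b1 b2 : S}
    (hb1 : Bottleneck T s0 SG b1) (hb2 : Bottleneck T s0 SG b2)
    {p r : List S} (hp : GoalTrace T s0 SG p) (hr : GoalTrace T s0 SG r) (hrn : r.Nodup)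
    (hpl : p.idxOf b2 < p.idxOf b1) (hrl : r.idxOf b1 < r.idxOf b2) : False := by
  have hb2p : b2 ∈ p := List.idxOf_lt_length_iff.1 (lt_of_lt_of_le hpl List.idxOf_le_length)
  have hb1r : b1 ∈ r := hb1 r hr
  have hb2r : b2 ∈ r := hb2 r hr
  set i := p.idxOf b2 with hi
  have hilt : i < p.length := List.idxOf_lt_length_iff.2 hb2p
  set k := r.idxOf b2 with hk
  have hklt : k < r.length := List.idxOf_lt_length_iff.2 hb2r
  set P := p.take (i + 1) with hP
  set Q := r.drop k with hQ
  have hQne : Q ≠ [] := by rw [hQ, ← List.length_pos_iff, List.length_drop]; omega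
  obtain ⟨hne, h0, hc, g, hg, hlast⟩ := hp
  obtain ⟨hner, h0r, hcr, gr, hgr, hlastr⟩ := hr
  have hsp := splice T s0 SG P Q b2
    (by rw [hP, head?_take (Nat.succ_pos i)]; exact h0)
    (hc.prefix (List.take_prefix _ _))
    (by rw [hP, getLast?_take_succ hilt, List.getElem_idxOf hilt])
    (hcr.suffix (List.drop_suffix _ _))
    (by rw [hQ, List.head?_drop]; exact List.getElem?_idxOf hb2r)
    ⟨gr, hgr, by rw [hQ, drop_getLast? (hQ ▸ hQne)]; exact hlastr⟩
  have hb1mem := hb1 _ hsp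
  rcases List.mem_append.1 hb1mem with hmem | hmem
  · exact absurd (idxOf_lt_of_mem_take hmem) (by omega)
  · -- b1 ∈ Q.tail = r.drop (k+1), but b1 ∈ r.take (k+1), contradicting nodup
    rw [hQ, List.tail_drop] at hmem
    have hb1take : b1 ∈ r.take (k + 1) := mem_take_of_idxOf_lt hb1r (by omega)
    have hsplit : r = r.take (k + 1) ++ r.drop (k + 1) := (List.take_append_drop _ _).symm
    have hdisj := (List.nodup_append.1 (hsplit ▸ hrn)).2.2
    exact hdisj _ hb1take _ hmem rfl

end Stmt6Aux

/-- in a finite MDP with at least one goal-reaching trace, the bottleneck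
states are totally ordered by the first-visit order: for any two bottlenecks `b1, b2`,
either every goal-reaching trace first visits `b1` no later than `b2`, or every
goal-reaching trace first visits `b2` no later than `b1`. -/
theorem stmt6 {S A : Type} [Fintype S] [Fintype A] [DecidableEq S]
    (T : S → A → S → ℝ) (s0 : S) (SG : Set S)
    (hreach : ∃ p : List S, GoalTrace T s0 SG p)
    (b1 b2 : S) (hb1 : Bottleneck T s0 SG b1) (hb2 : Bottleneck T s0 SG b2) :
    (∀ p : List S, GoalTrace T s0 SG p → p.idxOf b1 ≤ p.idxOf b2) ∨
    (∀ p : List S, GoalTrace T s0 SG p → p.idxOf b2 ≤ p.idxOf b1) := by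
  by_contra h
  push_neg at h
  obtain ⟨⟨p, hp, h1⟩, ⟨q, hq, h2⟩⟩ := h
  obtain ⟨r, hr, hrn⟩ := Stmt6Aux.exists_nodup_goaltrace T s0 SG hreach
  have hb1r : b1 ∈ r := hb1 r hr
  have hb2r : b2 ∈ r := hb2 r hr
  rcases lt_trichotomy (r.idxOf b1) (r.idxOf b2) with hlt | heq | hgt
  · exact Stmt6Aux.key T s0 SG hb1 hb2 hp hr hrn h1 hlt
  · have : b1 = b2 := (List.idxOf_inj hb1r).1 heq
    subst this
    omega
  · exact Stmt6Aux.key T s0 SG hb2 hb1 hq hr hrn h2 hgt
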